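/- Under the abstract stratification setting and Structural Hypotheses (i) and (ii): for every r₀ > 0 and every k ∈ {1, …, m − 1} the Hausdorff dimension of S^k_{r₀} is at most k, and moreover S^0_{r₀} is countable. -/

import Mathlib

open Metric MeasureTheory Set Filter

noncomputable section

/-- `core Ω s` is the set `Ω^s := {x ∈ Ω : dist(x, ∂Ω) ≥ 2s}`. -/
def core {n : ℕ} (Ω : Set (EuclideanSpace ℝ (Fin n))) (s : ℝ) :
    Set (EuclideanSpace ℝ (Fin n)) :=
  {x ∈ Ω | 2 * s ≤ infDist x (frontier Ω)}

/-- The abstract stratification setting: a bounded open set `Ω ⊆ ℝⁿ`, a monotone family of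
bounded nonnegative density functions `Θ_s` on `Ω^s`, and monotone control functions
`d_0 ≤ d_1 ≤ ⋯ ≤ d_m` on `U = {(x,s) : x ∈ Ω^s, Θ_0(x) > 0}`. -/
structure StratSetting (n : ℕ) where
  npos : 0 < n
  Ω : Set (EuclideanSpace ℝ (Fin n))
  isOpen : IsOpen Ω
  isBounded : Bornology.IsBounded Ω
  /-- the family of density functions -/
  Θ : ℝ → EuclideanSpace ℝ (Fin n) → ℝ
  /-- the number of control functions -/
  m : ℕ
  mpos : 0 < m
  mle : m ≤ n
  /-- the control (distance) functions -/
  d : ℕ → EuclideanSpace ℝ (Fin n) → ℝ → ℝ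
  Θ_nonneg : ∀ s x, 0 ≤ s → x ∈ core Ω s → 0 ≤ Θ s x
  Θ_mono : ∀ s s' x, 0 ≤ s → s < s' → x ∈ core Ω s' → Θ s x ≤ Θ s' x
  Θ_bdd : ∀ s₀ > 0, ∃ Λ > 0, ∀ s x, 0 ≤ s → s ≤ s₀ → x ∈ core Ω s₀ → Θ s x ≤ Λ
  d_nonneg : ∀ k x s, x ∈ core Ω s → 0 < Θ 0 x → 0 ≤ d k x s
  d_mono : ∀ k x s, k < m → x ∈ core Ω s → 0 < Θ 0 x → d k x s ≤ d (k + 1) x s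

namespace StratSetting

variable {n : ℕ} (S : StratSetting n)

/-- The set `U := {(x,s) : x ∈ Ω^s, Θ_0(x) > 0}`. -/
def U : Set (EuclideanSpace ℝ (Fin n) × ℝ) :=
  {p | p.1 ∈ core S.Ω p.2 ∧ 0 < S.Θ 0 p.1}

/-- Structural Hypothesis (i): quantitative differentiation. -/
def HypI : Prop :=
  ∀ s₀ > 0, ∀ ε₁ > 0, ∃ lam eta : ℝ,
    0 < lam ∧ lam < 1 / 4 ∧ 0 < eta ∧ eta < 1 / 4 ∧
    ∀ x s, (x, s) ∈ S.U → x ∈ core S.Ω s₀ → s < s₀ →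
      S.Θ s x - S.Θ (lam * s) x ≤ eta → S.d 0 x s ≤ ε₁

/-- Structural Hypothesis (ii): consistency of the control functions. -/
def HypII : Prop :=
  ∀ s₀ > 0, ∀ ε₂ ∈ Ioo (0 : ℝ) 1, ∀ τ ∈ Ioo (0 : ℝ) 1, ∃ eta : ℝ,
    0 < eta ∧ eta ≤ ε₂ ∧
    ∀ x s k, (x, 5 * s) ∈ S.U → x ∈ core S.Ω s₀ → 5 * s < s₀ → k < S.m →
      S.d k x (4 * s) ≤ eta → ε₂ ≤ S.d (k + 1) x (4 * s) →
      ∃ V : Submodule ℝ (EuclideanSpace ℝ (Fin n)), Module.finrank ℝ V = k ∧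
        ∀ y ∈ ball x s \ thickening (τ * s) ((x + ·) '' (V : Set (EuclideanSpace ℝ (Fin n)))),
          eta < S.d 0 y (4 * s)

/-- The singular stratum `S^k_{r, r₀, δ}`. -/
def strat (k : ℕ) (r r₀ δ : ℝ) : Set (EuclideanSpace ℝ (Fin n)) :=
  {x ∈ core S.Ω r₀ | 0 < S.Θ 0 x ∧ ∀ s, r ≤ s → s ≤ r₀ → δ ≤ S.d (k + 1) x s}

/-- The singular stratum `S^k_{r₀, δ} := ⋂_{0 < r ≤ r₀} S^k_{r, r₀, δ}`. -/
def stratInt (k : ℕ) (r₀ δ : ℝ) : Set (EuclideanSpace ℝ (Fin n)) :=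
  ⋂ r ∈ Ioc (0 : ℝ) r₀, S.strat k r r₀ δ

/-- The singular stratum `S^k_{r₀} := ⋃_{0 < δ < 1} S^k_{r₀, δ}`. -/
def stratFull (k : ℕ) (r₀ : ℝ) : Set (EuclideanSpace ℝ (Fin n)) :=
  ⋃ δ ∈ Ioo (0 : ℝ) 1, S.stratInt k r₀ δ

end StratSetting


section AuxLemmas
open scoped ENNReal NNReal Topology


lemma card_le_of_separated {k : ℕ} {R r : ℝ} (hr : 0 < r) (hR : r ≤ R)
    (F : Finset (EuclideanSpace ℝ (Fin k)))
    (hF : ↑F ⊆ closedBall (0 : EuclideanSpace ℝ (Fin k)) R)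
    (hsep : (F : Set (EuclideanSpace ℝ (Fin k))).Pairwise fun a b => r ≤ dist a b) :
    (F.card : ℝ) ≤ (4 * R / r) ^ k := by
  have hR0 : 0 < R := lt_of_lt_of_le hr hR
  set v : ℝ≥0∞ := volume (ball (0 : EuclideanSpace ℝ (Fin k)) 1) with hv
  have hv0 : v ≠ 0 := (measure_ball_pos volume _ one_pos).ne'
  have hvt : v ≠ ⊤ := measure_ball_lt_top.ne
  have hdisj : (↑F : Set (EuclideanSpace ℝ (Fin k))).PairwiseDisjoint
      fun z => ball z (r / 2) := by
    intro a ha b hb hab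
    exact ball_disjoint_ball (by linarith [hsep ha hb hab])
  have hsub : ∀ z ∈ F, ball z (r / 2) ⊆ ball (0 : EuclideanSpace ℝ (Fin k)) (2 * R) := by
    intro z hz y hy
    have hz' : dist z (0 : EuclideanSpace ℝ (Fin k)) ≤ R := mem_closedBall.1 (hF hz)
    have ht : dist y (0 : EuclideanSpace ℝ (Fin k)) ≤ dist y z + dist z 0 := dist_triangle _ _ _
    simp only [mem_ball] at hy ⊢
    linarith
  have hmeas : volume (⋃ z ∈ F, ball z (r / 2)) = ∑ z ∈ F, volume (ball z (r / 2)) :=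
    measure_biUnion_finset hdisj fun z _ => measurableSet_ball
  have hballz : ∀ z : EuclideanSpace ℝ (Fin k),
      volume (ball z (r / 2)) = ENNReal.ofReal ((r / 2) ^ k) * v := by
    intro z
    rw [Measure.addHaar_ball_of_pos volume z (by linarith)]
    rw [finrank_euclideanSpace_fin]
  have hbigball : volume (ball (0 : EuclideanSpace ℝ (Fin k)) (2 * R)) =
      ENNReal.ofReal ((2 * R) ^ k) * v := by
    rw [Measure.addHaar_ball_of_pos volume _ (by linarith)]
    rw [finrank_euclideanSpace_fin]
  have hle : (F.card : ℝ≥0∞) * (ENNReal.ofReal ((r / 2) ^ k) * v) ≤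
      ENNReal.ofReal ((2 * R) ^ k) * v := by
    calc (F.card : ℝ≥0∞) * (ENNReal.ofReal ((r / 2) ^ k) * v)
        = ∑ z ∈ F, volume (ball z (r / 2)) := by
          simp [hballz, Finset.sum_const, nsmul_eq_mul]
      _ = volume (⋃ z ∈ F, ball z (r / 2)) := hmeas.symm
      _ ≤ volume (ball (0 : EuclideanSpace ℝ (Fin k)) (2 * R)) :=
          measure_mono (iUnion₂_subset hsub)
      _ = ENNReal.ofReal ((2 * R) ^ k) * v := hbigball
  have h2R : (2 * R) ^ k ≤ (4 * R / r) ^ k * (r / 2) ^ k := by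
    rw [← mul_pow]
    apply pow_le_pow_left₀ (by positivity)
    have hq : 4 * R / r * (r / 2) = 2 * R := by field_simp; ring
    rw [hq]
  have hle2 : (F.card : ℝ≥0∞) * ENNReal.ofReal ((r / 2) ^ k) ≤
      ENNReal.ofReal ((4 * R / r) ^ k) * ENNReal.ofReal ((r / 2) ^ k) := by
    have hBCa : ENNReal.ofReal ((2 * R) ^ k) ≤
        ENNReal.ofReal ((4 * R / r) ^ k) * ENNReal.ofReal ((r / 2) ^ k) := by
      rw [← ENNReal.ofReal_mul (by positivity)]
      exact ENNReal.ofReal_le_ofReal h2R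
    have h1 : (F.card : ℝ≥0∞) * ENNReal.ofReal ((r / 2) ^ k) * v ≤
        ENNReal.ofReal ((4 * R / r) ^ k) * ENNReal.ofReal ((r / 2) ^ k) * v := by
      rw [mul_assoc]
      exact le_trans hle (mul_le_mul' hBCa le_rfl)
    exact (ENNReal.mul_le_mul_iff_left hv0 hvt).1 h1
  have hr2k : ENNReal.ofReal ((r / 2) ^ k) ≠ 0 := by
    simp only [ne_eq, ENNReal.ofReal_eq_zero, not_le]
    positivity
  have hcard : (F.card : ℝ≥0∞) ≤ ENNReal.ofReal ((4 * R / r) ^ k) :=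
    (ENNReal.mul_le_mul_iff_left hr2k ENNReal.ofReal_ne_top).1 hle2
  have h := ENNReal.toReal_mono ENNReal.ofReal_ne_top hcard
  simpa [ENNReal.toReal_ofReal (by positivity : (0:ℝ) ≤ (4 * R / r) ^ k)] using h


lemma exists_net_euclidean (k : ℕ) {R r : ℝ} (hr : 0 < r) (hR : r ≤ R) :
    ∃ F : Finset (EuclideanSpace ℝ (Fin k)), ((F.card : ℝ) ≤ (4 * R / r) ^ k) ∧
      ∀ p ∈ closedBall (0 : EuclideanSpace ℝ (Fin k)) R, ∃ z ∈ F, dist p z ≤ r := by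
  classical
  set E := EuclideanSpace ℝ (Fin k) with hE
  set SS : Set ℕ := {c | ∃ F : Finset E, ↑F ⊆ closedBall (0 : E) R ∧
    (F : Set E).Pairwise (fun a b => r ≤ dist a b) ∧ F.card = c} with hSS
  have hne : SS.Nonempty := ⟨0, ∅, by simp, by simp, by simp⟩
  have hbdd : BddAbove SS := by
    refine ⟨Nat.floor ((4 * R / r) ^ k), fun c hc => ?_⟩
    obtain ⟨F, hF1, hF2, hF3⟩ := hc
    have := card_le_of_separated hr hR F hF1 hF2
    rw [hF3] at this
    exact Nat.le_floor this
  obtain ⟨F, hF1, hF2, hF3⟩ := Nat.sSup_mem hne hbdd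
  refine ⟨F, ?_, ?_⟩
  · exact card_le_of_separated hr hR F hF1 hF2
  · intro p hp
    by_contra hcon
    push_neg at hcon
    have hpF : p ∉ F := fun hpF => by
      have := hcon p hpF; simp at this; linarith
    have hins : ↑(insert p F) ⊆ closedBall (0 : E) R := by
      rw [Finset.coe_insert]
      exact Set.insert_subset hp hF1
    have hins2 : ((insert p F : Finset E) : Set E).Pairwise (fun a b => r ≤ dist a b) := by
      rw [Finset.coe_insert]
      apply hF2.insert
      intro b hb hne
      constructor
      · exact le_of_lt (hcon b hb)
      · rw [dist_comm]; exact le_of_lt (hcon b hb)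
    have hmem : F.card + 1 ∈ SS := ⟨insert p F, hins, hins2, Finset.card_insert_of_notMem hpF⟩
    have := le_csSup hbdd hmem
    rw [hF3] at this
    omega

lemma exists_net (E : Type*) [NormedAddCommGroup E] [InnerProductSpace ℝ E]
    [FiniteDimensional ℝ E] {R r : ℝ} (hr : 0 < r) (hR : r ≤ R) :
    ∃ F : Finset E, ((F.card : ℝ) ≤ (4 * R / r) ^ (Module.finrank ℝ E)) ∧
      ∀ p ∈ closedBall (0 : E) R, ∃ z ∈ F, dist p z ≤ r := by
  classical
  set e := (stdOrthonormalBasis ℝ E).repr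
  obtain ⟨F, hF1, hF2⟩ := exists_net_euclidean (Module.finrank ℝ E) hr hR
  refine ⟨F.image e.symm, ?_, ?_⟩
  · calc ((F.image e.symm).card : ℝ) ≤ (F.card : ℝ) := by
          exact_mod_cast Finset.card_image_le
      _ ≤ _ := hF1
  · intro p hp
    have hep : e p ∈ closedBall (0 : EuclideanSpace ℝ (Fin (Module.finrank ℝ E))) R := by
      simp only [mem_closedBall, dist_zero_right] at hp ⊢
      rw [e.norm_map]; exact hp
    obtain ⟨z, hz, hdz⟩ := hF2 (e p) hep
    refine ⟨e.symm z, Finset.mem_image_of_mem _ hz, ?_⟩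
    have : dist p (e.symm z) = dist (e p) z := by
      rw [← e.dist_map]
      simp
    rw [this]; exact hdz


/-- Covering a tube around a `k`-dimensional affine subspace, intersected with a ball,
by balls of radius `4τs` centered at points of the set. -/
lemma tube_cover {n : ℕ} (V : Submodule ℝ (EuclideanSpace ℝ (Fin n)))
    (x : EuclideanSpace ℝ (Fin n)) {s τ : ℝ} (hs : 0 < s) (hτ0 : 0 < τ) (hτ1 : τ ≤ 1)
    (T : Set (EuclideanSpace ℝ (Fin n)))
    (hT : T ⊆ ball x s ∩ thickening (τ * s) ((x + ·) '' (V : Set (EuclideanSpace ℝ (Fin n)))))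
    (hxT : x ∈ T) :
    ∃ F : Finset (EuclideanSpace ℝ (Fin n)), ↑F ⊆ T ∧
      ((F.card : ℝ) ≤ (8 / τ) ^ (Module.finrank ℝ V)) ∧
      T ⊆ ⋃ z ∈ F, ball z (4 * (τ * s)) := by
  classical
  have hτs : 0 < τ * s := mul_pos hτ0 hs
  obtain ⟨FV, hFV1, hFV2⟩ := exists_net V (R := 2 * s) (r := τ * s) hτs (by nlinarith)
  -- the witness predicate
  set Q : V → EuclideanSpace ℝ (Fin n) → Prop := fun u z =>
    z ∈ T ∧ ∃ v : V, dist z (x + (v : EuclideanSpace ℝ (Fin n))) < τ * s ∧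
      dist (v : EuclideanSpace ℝ (Fin n)) (u : EuclideanSpace ℝ (Fin n)) ≤ τ * s with hQ
  set c : V → EuclideanSpace ℝ (Fin n) := fun u =>
    if h : ∃ z, Q u z then h.choose else x with hc
  have hcT : ∀ u, c u ∈ T := by
    intro u
    by_cases h : ∃ z, Q u z
    · simp only [hc, dif_pos h]; exact h.choose_spec.1
    · simp only [hc, dif_neg h]; exact hxT
  refine ⟨FV.image c, ?_, ?_, ?_⟩
  · intro z hz
    simp only [Finset.coe_image, Set.mem_image] at hz
    obtain ⟨u, _, rfl⟩ := hz
    exact hcT u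
  · calc ((FV.image c).card : ℝ) ≤ (FV.card : ℝ) := by exact_mod_cast Finset.card_image_le
      _ ≤ (4 * (2 * s) / (τ * s)) ^ (Module.finrank ℝ V) := hFV1
      _ = (8 / τ) ^ (Module.finrank ℝ V) := by
          congr 1
          field_simp
          ring
  · intro y hy
    obtain ⟨hyball, hythick⟩ := hT hy
    rw [mem_thickening_iff] at hythick
    obtain ⟨w, hw, hdyw⟩ := hythick
    obtain ⟨v0, hv0V, rfl⟩ := hw
    -- ‖v0‖ ≤ 2s
    have hv0n : ‖v0‖ ≤ 2 * s := by
      have h1 : dist (x + v0) x < τ * s + s := by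
        calc dist (x + v0) x ≤ dist (x + v0) y + dist y x := dist_triangle _ _ _
          _ < τ * s + s := by
              rw [dist_comm (x + v0) y]
              exact add_lt_add hdyw (mem_ball.1 hyball)
      have h2 : dist (x + v0) x = ‖v0‖ := by
        rw [dist_eq_norm]; simp
      nlinarith
    set p : V := ⟨v0, hv0V⟩ with hp
    have hpB : p ∈ closedBall (0 : V) (2 * s) := by
      simp only [mem_closedBall, dist_zero_right]
      rw [← Submodule.norm_coe p]  -- norm in subtype
      exact hv0n
    obtain ⟨u, huF, hdpu⟩ := hFV2 p hpB
    have hdpu' : dist (v0 : EuclideanSpace ℝ (Fin n)) (u : EuclideanSpace ℝ (Fin n)) ≤ τ * s := by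
      rw [Subtype.dist_eq] at hdpu
      exact hdpu
    have hdyw' : dist y (x + (p : EuclideanSpace ℝ (Fin n))) < τ * s := hdyw
    have hQy : Q u y := ⟨hy, ⟨p, hdyw', hdpu'⟩⟩
    have hex : ∃ z, Q u z := ⟨y, hQy⟩
    have hcu := hex.choose_spec
    obtain ⟨hcuT, v', hv'1, hv'2⟩ := hcu
    have hcuq : c u = hex.choose := by simp only [hc, dif_pos hex]
    refine mem_iUnion₂.2 ⟨c u, Finset.mem_image_of_mem c huF, ?_⟩
    rw [mem_ball, hcuq]
    have e1 : dist y hex.choose ≤ dist y (x + (v0 : EuclideanSpace ℝ (Fin n))) +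
        dist (x + (v0 : EuclideanSpace ℝ (Fin n))) (x + (v' : EuclideanSpace ℝ (Fin n))) +
        dist (x + (v' : EuclideanSpace ℝ (Fin n))) hex.choose := dist_triangle4 _ _ _ _
    have e2 : dist y (x + (v0 : EuclideanSpace ℝ (Fin n))) < τ * s := hdyw
    have e3 : dist (x + (v0 : EuclideanSpace ℝ (Fin n))) (x + (v' : EuclideanSpace ℝ (Fin n)))
        ≤ 2 * (τ * s) := by
      rw [dist_add_left]
      calc dist (v0 : EuclideanSpace ℝ (Fin n)) (v' : EuclideanSpace ℝ (Fin n)) ≤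
          dist (v0 : EuclideanSpace ℝ (Fin n)) (u : EuclideanSpace ℝ (Fin n)) +
          dist (u : EuclideanSpace ℝ (Fin n)) (v' : EuclideanSpace ℝ (Fin n)) := dist_triangle _ _ _
        _ ≤ τ * s + τ * s := add_le_add hdpu' (by rw [dist_comm]; exact hv'2)
        _ = 2 * (τ * s) := by ring
    have e4 : dist (x + (v' : EuclideanSpace ℝ (Fin n))) hex.choose < τ * s := by
      rw [dist_comm]; exact hv'1
    linarith


lemma hausdorff_zero_of_cover {n : ℕ} (A : Set (EuclideanSpace ℝ (Fin n)))
    {ρ τ' M : ℝ} (hρ : 0 < ρ) (hτ'0 : 0 < τ') (hτ'1 : τ' < 1) (hM : 1 ≤ M)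
    (hcov : ∀ x ∈ A, ∀ s : ℝ, 0 < s → s ≤ ρ → ∃ F : Finset (EuclideanSpace ℝ (Fin n)),
      ↑F ⊆ A ∧ ((F.card : ℝ) ≤ M) ∧ A ∩ ball x s ⊆ ⋃ z ∈ F, ball z (τ' * s))
    {d : ℝ} (hd : 0 ≤ d)
    (hsmall : ENNReal.ofReal M * ENNReal.ofReal (τ' ^ d) < 1) :
    μH[d] A = 0 := by
  classical
  have key : ∀ x ∈ A, μH[d] (A ∩ ball x ρ) = 0 := by
    intro x hxA
    have iter : ∀ j : ℕ, ∃ F : Finset (EuclideanSpace ℝ (Fin n)), ↑F ⊆ A ∧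
        ((F.card : ℝ) ≤ M ^ j) ∧ A ∩ ball x ρ ⊆ ⋃ z ∈ F, ball z (τ' ^ j * ρ) := by
      intro j
      induction j with
      | zero =>
        refine ⟨{x}, by simpa using hxA, by simp, ?_⟩
        simp only [pow_zero, one_mul, Finset.mem_singleton]
        intro y hy
        exact mem_iUnion₂.2 ⟨x, by simp, hy.2⟩
      | succ j ih =>
        obtain ⟨F, hFA, hFc, hFcov⟩ := ih
        have hτj1 : τ' ^ j ≤ 1 := pow_le_one₀ hτ'0.le hτ'1.le
        have hz : ∀ z : {z // z ∈ F}, ∃ G : Finset (EuclideanSpace ℝ (Fin n)), ↑G ⊆ A ∧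
            ((G.card : ℝ) ≤ M) ∧
            A ∩ ball (z : EuclideanSpace ℝ (Fin n)) (τ' ^ j * ρ) ⊆
              ⋃ w ∈ G, ball w (τ' * (τ' ^ j * ρ)) := by
          intro z
          exact hcov z (hFA z.2) _ (by positivity) (by nlinarith)
        choose G hG1 hG2 hG3 using hz
        refine ⟨F.attach.biUnion G, ?_, ?_, ?_⟩
        · intro w hw
          simp only [Finset.coe_biUnion, Finset.mem_coe, Finset.mem_attach, Set.mem_iUnion,
            Set.iUnion_true] at hw
          obtain ⟨z, hzw⟩ := hw
          exact hG1 z hzw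
        · calc ((F.attach.biUnion G).card : ℝ)
              ≤ ((∑ z ∈ F.attach, (G z).card : ℕ) : ℝ) := by
                exact_mod_cast Finset.card_biUnion_le
            _ = ∑ z ∈ F.attach, ((G z).card : ℝ) := by push_cast; ring
            _ ≤ ∑ _z ∈ F.attach, M := Finset.sum_le_sum fun z _ => hG2 z
            _ = (F.card : ℝ) * M := by
                rw [Finset.sum_const, Finset.card_attach, nsmul_eq_mul]
            _ ≤ M ^ j * M := by
                have h0M : (0:ℝ) ≤ M := by linarith
                exact mul_le_mul_of_nonneg_right hFc h0M
            _ = M ^ (j + 1) := by ring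
        · intro y hy
          obtain ⟨z, hzF, hyz⟩ := mem_iUnion₂.1 (hFcov hy)
          have : y ∈ A ∩ ball z (τ' ^ j * ρ) := ⟨hy.1, hyz⟩
          obtain ⟨w, hwG, hyw⟩ := mem_iUnion₂.1 (hG3 ⟨z, hzF⟩ this)
          refine mem_iUnion₂.2 ⟨w, ?_, ?_⟩
          · exact Finset.mem_biUnion.2 ⟨⟨z, hzF⟩, Finset.mem_attach _ _, hwG⟩
          · have : τ' * (τ' ^ j * ρ) = τ' ^ (j + 1) * ρ := by ring
            rwa [this] at hyw
    choose F hF1 hF2 hF3 using iter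
    set q : ℝ≥0∞ := ENNReal.ofReal M * ENNReal.ofReal (τ' ^ d) with hq
    set K : ℝ≥0∞ := ENNReal.ofReal ((2 * ρ) ^ d) with hK
    have htend0 : Tendsto (fun j : ℕ => 2 * (τ' ^ j * ρ)) atTop (𝓝 0) := by
      have h1 : Tendsto (fun j : ℕ => τ' ^ j) atTop (𝓝 0) :=
        tendsto_pow_atTop_nhds_zero_of_lt_one hτ'0.le hτ'1
      have h2 := h1.const_mul (2 * ρ)
      simp only [mul_zero] at h2
      convert h2 using 2 with j
      ring
    have htend : Tendsto (fun j : ℕ => ENNReal.ofReal (2 * (τ' ^ j * ρ))) atTop (𝓝 0) := by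
      have := ENNReal.tendsto_ofReal htend0
      rwa [ENNReal.ofReal_zero] at this
    have hμ := MeasureTheory.Measure.hausdorffMeasure_le_liminf_sum d (A ∩ ball x ρ)
      (fun j => ENNReal.ofReal (2 * (τ' ^ j * ρ))) htend
      (fun j (i : {z // z ∈ F j}) => ball (i : EuclideanSpace ℝ (Fin n)) (τ' ^ j * ρ))
      (by
        refine Eventually.of_forall fun j => fun i => ?_
        show EMetric.diam (ball (i : EuclideanSpace ℝ (Fin n)) (τ' ^ j * ρ)) ≤
          ENNReal.ofReal (2 * (τ' ^ j * ρ))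
        rw [← Metric.emetric_ball]
        refine le_trans EMetric.diam_ball ?_
        rw [ENNReal.ofReal_mul (by norm_num : (0:ℝ) ≤ 2)]
        simp)
      (by
        refine Eventually.of_forall fun j => ?_
        intro y hy
        obtain ⟨z, hzF, hyz⟩ := mem_iUnion₂.1 (hF3 j hy)
        exact mem_iUnion.2 ⟨⟨z, hzF⟩, hyz⟩)
    have hbound : ∀ j : ℕ,
        (∑ i : {z // z ∈ F j},
          EMetric.diam (ball (i : EuclideanSpace ℝ (Fin n)) (τ' ^ j * ρ)) ^ d) ≤ K * q ^ j := by
      intro j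
      have hdiam : ∀ i : {z // z ∈ F j},
          EMetric.diam (ball (i : EuclideanSpace ℝ (Fin n)) (τ' ^ j * ρ)) ^ d ≤
          ENNReal.ofReal ((2 * (τ' ^ j * ρ)) ^ d) := by
        intro i
        rw [← ENNReal.ofReal_rpow_of_pos (by positivity)]
        refine ENNReal.rpow_le_rpow ?_ hd
        rw [← Metric.emetric_ball]
        refine le_trans EMetric.diam_ball ?_
        rw [ENNReal.ofReal_mul (by norm_num : (0:ℝ) ≤ 2)]
        simp
      calc (∑ i : {z // z ∈ F j},
            EMetric.diam (ball (i : EuclideanSpace ℝ (Fin n)) (τ' ^ j * ρ)) ^ d)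
          ≤ ∑ _i : {z // z ∈ F j}, ENNReal.ofReal ((2 * (τ' ^ j * ρ)) ^ d) :=
            Finset.sum_le_sum fun i _ => hdiam i
        _ = ((F j).card : ℝ≥0∞) * ENNReal.ofReal ((2 * (τ' ^ j * ρ)) ^ d) := by
            rw [Finset.sum_const, nsmul_eq_mul]
            congr 1
            simp [Finset.card_univ]
        _ ≤ ENNReal.ofReal (M ^ j) * ENNReal.ofReal ((2 * (τ' ^ j * ρ)) ^ d) := by
            refine mul_le_mul' ?_ le_rfl
            rw [← ENNReal.ofReal_natCast ((F j).card)]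
            exact ENNReal.ofReal_le_ofReal (hF2 j)
        _ = K * q ^ j := by
            rw [hq, hK]
            rw [← ENNReal.ofReal_mul (by positivity)]
            rw [mul_pow, ← ENNReal.ofReal_pow (by linarith) j,
              ← ENNReal.ofReal_pow (by positivity) j]
            rw [← ENNReal.ofReal_mul (by positivity), ← ENNReal.ofReal_mul (by positivity)]
            congr 1
            have e1 : (2 * (τ' ^ j * ρ)) ^ d = (2 * ρ) ^ d * (τ' ^ j) ^ d := by
              rw [← Real.mul_rpow (by positivity) (by positivity)]
              congr 1
              ring
            have e2 : (τ' ^ j) ^ d = (τ' ^ d) ^ j := by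
              rw [← Real.rpow_natCast τ' j, ← Real.rpow_mul hτ'0.le,
                ← Real.rpow_natCast (τ' ^ d) j, ← Real.rpow_mul (by positivity)]
              rw [mul_comm]
            rw [e1, e2]
            ring
    have hlim : liminf (fun j : ℕ => ∑ i : {z // z ∈ F j},
        EMetric.diam (ball (i : EuclideanSpace ℝ (Fin n)) (τ' ^ j * ρ)) ^ d) atTop = 0 := by
      have h1 : Tendsto (fun j : ℕ => K * q ^ j) atTop (𝓝 0) := by
        have h2 : Tendsto (fun j : ℕ => q ^ j) atTop (𝓝 0) :=
          ENNReal.tendsto_pow_atTop_nhds_zero_of_lt_one hsmall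
        have h3 := ENNReal.Tendsto.const_mul h2 (Or.inr (by simp [hK] : K ≠ ⊤))
        simpa using h3
      refine le_antisymm ?_ zero_le
      calc liminf (fun j : ℕ => ∑ i : {z // z ∈ F j},
            EMetric.diam (ball (i : EuclideanSpace ℝ (Fin n)) (τ' ^ j * ρ)) ^ d) atTop
          ≤ liminf (fun j : ℕ => K * q ^ j) atTop :=
            liminf_le_liminf (Eventually.of_forall hbound)
        _ = 0 := h1.liminf_eq
    beta_reduce at hμ
    replace hμ := hμ.trans_eq hlim
    exact le_antisymm hμ zero_le
  -- countable dense subset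
  obtain ⟨D0, hD0c, hD0d⟩ := TopologicalSpace.exists_countable_dense (↥A)
  set D : Set (EuclideanSpace ℝ (Fin n)) := Subtype.val '' D0 with hD
  have hDA : D ⊆ A := by
    rintro _ ⟨y, _, rfl⟩; exact y.2
  have hDc : D.Countable := hD0c.image _
  have hcover : A ⊆ ⋃ y ∈ D, A ∩ ball y ρ := by
    intro x hx
    obtain ⟨y, hy1, hy2⟩ := Metric.dense_iff.1 hD0d ⟨x, hx⟩ ρ hρ
    refine mem_iUnion₂.2 ⟨(y : EuclideanSpace ℝ (Fin n)), mem_image_of_mem _ hy2, hx, ?_⟩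
    rw [mem_ball]
    have h5 : dist y (⟨x, hx⟩ : ↥A) < ρ := mem_ball.1 hy1
    rw [Subtype.dist_eq, dist_comm] at h5
    exact h5
  refine le_antisymm ?_ zero_le
  calc μH[d] A ≤ μH[d] (⋃ y ∈ D, A ∩ ball y ρ) := measure_mono hcover
    _ = 0 := by
        refine (measure_biUnion_null_iff hDc).2 ?_
        intro y hy
        exact key y (hDA hy)

end AuxLemmas

open scoped ENNReal NNReal Topology

namespace StratSetting

variable {n : ℕ} (S : StratSetting n)

lemma core_mono {s t : ℝ} (h : s ≤ t) : core S.Ω t ⊆ core S.Ω s :=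
  fun x hx => ⟨hx.1, le_trans (by linarith) hx.2⟩

lemma stratInt_mono {k : ℕ} {r₀ δ δ' : ℝ} (h : δ' ≤ δ) :
    S.stratInt k r₀ δ ⊆ S.stratInt k r₀ δ' := by
  intro x hx
  simp only [stratInt, Set.mem_iInter] at hx ⊢
  intro r hr
  obtain ⟨h1, h2, h3⟩ := hx r hr
  exact ⟨h1, h2, fun s hs1 hs2 => le_trans h (h3 s hs1 hs2)⟩

lemma stratInt_subset {k : ℕ} {r₀ δ : ℝ} (hr₀ : 0 < r₀) {x : EuclideanSpace ℝ (Fin n)}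
    (hx : x ∈ S.stratInt k r₀ δ) :
    x ∈ core S.Ω r₀ ∧ 0 < S.Θ 0 x ∧ ∀ σ, 0 < σ → σ ≤ r₀ → δ ≤ S.d (k + 1) x σ := by
  simp only [stratInt, Set.mem_iInter] at hx
  have h0 := hx r₀ ⟨hr₀, le_rfl⟩
  refine ⟨h0.1, h0.2.1, fun σ hσ1 hσ2 => ?_⟩
  exact (hx σ ⟨hσ1, hσ2⟩).2.2 σ le_rfl hσ2

/-- The key geometric lemma: the stratum `S^k_{r₀,δ}` decomposes into countably many pieces
`A i`, each of which has, at every sufficiently small scale, all of its points inside a tube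
around a `≤ k`-dimensional affine subspace. -/
lemma key (hI : S.HypI) (hII : S.HypII) {r₀ : ℝ} (hr₀ : 0 < r₀) {k : ℕ} (hk : k < S.m)
    {δ : ℝ} (hδ : δ ∈ Ioo (0:ℝ) 1) {τ : ℝ} (hτ0 : 0 < τ) (hτ1 : τ < 1) :
    ∃ A : ℕ → Set (EuclideanSpace ℝ (Fin n)),
      (∀ i, A i ⊆ S.stratInt k r₀ δ) ∧ (S.stratInt k r₀ δ ⊆ ⋃ i, A i) ∧
      ∀ i : ℕ, ∃ ρ, 0 < ρ ∧ ∀ x ∈ A i, ∀ s : ℝ, 0 < s → s ≤ ρ →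
        ∃ V : Submodule ℝ (EuclideanSpace ℝ (Fin n)), Module.finrank ℝ V ≤ k ∧
          A i ∩ ball x s ⊆ ball x s ∩
            thickening (τ * s) ((x + ·) '' (V : Set (EuclideanSpace ℝ (Fin n)))) := by
  classical
  obtain ⟨Λ, hΛ0, hΛ⟩ := S.Θ_bdd r₀ hr₀
  -- the chain of thresholds from Hypothesis (ii)
  have hτI : τ ∈ Ioo (0:ℝ) 1 := ⟨hτ0, hτ1⟩
  let step : {e : ℝ // e ∈ Ioo (0:ℝ) 1} → {e : ℝ // e ∈ Ioo (0:ℝ) 1} := fun e =>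
    ⟨(hII r₀ hr₀ e.1 e.2 τ hτI).choose,
      (hII r₀ hr₀ e.1 e.2 τ hτI).choose_spec.1,
      lt_of_le_of_lt (hII r₀ hr₀ e.1 e.2 τ hτI).choose_spec.2.1 e.2.2⟩
  let g' : ℕ → {e : ℝ // e ∈ Ioo (0:ℝ) 1} := fun i => step^[i] ⟨δ, hδ⟩
  let g : ℕ → ℝ := fun i => (g' i).1
  have hg0 : ∀ i, 0 < g i := fun i => (g' i).2.1
  have hg1 : ∀ i, g i < 1 := fun i => (g' i).2.2
  have hgδ : g 0 = δ := rfl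
  have hgsucc : ∀ i, g' (i + 1) = step (g' i) := fun i => Function.iterate_succ_apply' _ _ _
  have hgstep : ∀ i, g (i + 1) ≤ g i := by
    intro i
    have h := (hII r₀ hr₀ (g' i).1 (g' i).2 τ hτI).choose_spec.2.1
    have h2 : g (i + 1) = (hII r₀ hr₀ (g' i).1 (g' i).2 τ hτI).choose := by
      show (g' (i+1)).1 = _
      rw [hgsucc i]
    rw [h2]
    exact h
  have hganti : ∀ a b : ℕ, a ≤ b → g b ≤ g a := by
    intro a b hab
    induction b with
    | zero => simp_all
    | succ b ih =>
      rcases Nat.lt_or_ge a (b+1) with h | h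
      · exact le_trans (hgstep b) (ih (by omega))
      · have : a = b + 1 := by omega
        subst this; rfl
  have hchain : ∀ i, ∀ x s k', (x, 5*s) ∈ S.U → x ∈ core S.Ω r₀ → 5*s < r₀ → k' < S.m →
      S.d k' x (4*s) ≤ g (i+1) → g i ≤ S.d (k'+1) x (4*s) →
      ∃ V : Submodule ℝ (EuclideanSpace ℝ (Fin n)), Module.finrank ℝ V = k' ∧
        ∀ y ∈ ball x s \ thickening (τ*s) ((x + ·) '' (V : Set (EuclideanSpace ℝ (Fin n)))),
          g (i+1) < S.d 0 y (4*s) := by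
    intro i x s k' hU hcore hs5 hk' hd1 hd2
    have h2 : g (i + 1) = (hII r₀ hr₀ (g' i).1 (g' i).2 τ hτI).choose := by
      show (g' (i+1)).1 = _
      rw [hgsucc i]
    rw [h2] at hd1 ⊢
    exact (hII r₀ hr₀ (g' i).1 (g' i).2 τ hτI).choose_spec.2.2 x s k' hU hcore hs5 hk' hd1 hd2
  -- Hypothesis (i) parameters at threshold `g (k+1)`
  obtain ⟨lam, eta, hlam0, hlam4, heta0, heta4, hHI⟩ := hI r₀ hr₀ (g (k+1)) (hg0 (k+1))
  have hlam1 : lam < 1 := by linarith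
  -- good scales
  set good : EuclideanSpace ℝ (Fin n) → ℝ → Prop :=
    fun x σ => S.Θ σ x - S.Θ (lam * σ) x ≤ eta with hgood
  set T : Set (EuclideanSpace ℝ (Fin n)) := S.stratInt k r₀ δ with hT
  have hTfacts : ∀ x ∈ T, x ∈ core S.Ω r₀ ∧ 0 < S.Θ 0 x ∧
      ∀ σ, 0 < σ → σ ≤ r₀ → δ ≤ S.d (k + 1) x σ := fun x hx => S.stratInt_subset hr₀ hx
  -- good scales give small d 0
  have hgoodd : ∀ x ∈ T, ∀ σ, 0 < σ → σ < r₀ → good x σ → S.d 0 x σ ≤ g (k+1) := by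
    intro x hx σ hσ0 hσr hgd
    obtain ⟨hc, hΘ, _⟩ := hTfacts x hx
    exact hHI x σ ⟨S.core_mono (le_of_lt hσr) hc, hΘ⟩ hc hσr hgd
  -- all small enough scales are good
  have hrho : ∀ x ∈ T, ∃ i : ℕ, ∀ σ, 0 < σ → σ < 1/(i+1 : ℝ) → good x σ := by
    intro x hx
    obtain ⟨hc, hΘ, _⟩ := hTfacts x hx
    by_contra hcon
    push_neg at hcon
    have badex : ∀ ρ : ℝ, 0 < ρ → ∃ σ, 0 < σ ∧ σ < ρ ∧ ¬ good x σ := by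
      intro ρ hρ
      obtain ⟨i, hi⟩ := exists_nat_one_div_lt hρ
      obtain ⟨σ, hσ0, hσi, hσg⟩ := hcon i
      exact ⟨σ, hσ0, lt_trans hσi hi, hσg⟩
    -- construct a decreasing chain of bad scales
    choose f hf1 hf2 hf3 using badex
    let P : ℝ → Prop := fun σ => 0 < σ ∧ σ < r₀ ∧ ¬ good x σ
    let c0 : {σ : ℝ // P σ} := ⟨f r₀ hr₀, hf1 r₀ hr₀, hf2 r₀ hr₀, hf3 r₀ hr₀⟩
    let cstep : {σ : ℝ // P σ} → {σ : ℝ // P σ} := fun ci =>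
      ⟨f (lam * ci.1) (mul_pos hlam0 ci.2.1), hf1 _ _,
        by
          have h1 := hf2 (lam * ci.1) (mul_pos hlam0 ci.2.1)
          nlinarith [ci.2.1, ci.2.2.1],
        hf3 _ _⟩
    let c : ℕ → {σ : ℝ // P σ} := fun i => cstep^[i] c0
    have hcsucc : ∀ i, c (i+1) = cstep (c i) := fun i => Function.iterate_succ_apply' _ _ _
    have hcrel : ∀ i, (c (i+1)).1 < lam * (c i).1 := by
      intro i
      rw [hcsucc i]
      exact hf2 _ _
    have hcore' : ∀ i, x ∈ core S.Ω (lam * (c i).1) := by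
      intro i
      refine S.core_mono ?_ hc
      nlinarith [(c i).2.1, (c i).2.2.1]
    have tel : ∀ i : ℕ, ((i:ℝ)+1) * eta < S.Θ ((c 0).1) x - S.Θ (lam * (c i).1) x := by
      intro i
      induction i with
      | zero =>
        have hbad := (c 0).2.2.2
        rw [hgood] at hbad
        simp only [not_le] at hbad
        push_cast
        linarith
      | succ i ih =>
        have hbad := (c (i+1)).2.2.2
        rw [hgood] at hbad
        simp only [not_le] at hbad
        have hmono : S.Θ ((c (i+1)).1) x ≤ S.Θ (lam * (c i).1) x :=
          S.Θ_mono _ _ x (le_of_lt (c (i+1)).2.1) (hcrel i) (hcore' i)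
        push_cast
        push_cast at ih
        linarith
    obtain ⟨N, hN⟩ := exists_nat_gt (Λ / eta)
    have h1 := tel N
    have h2 : S.Θ ((c 0).1) x ≤ Λ :=
      hΛ _ x (le_of_lt (c 0).2.1) (le_of_lt (c 0).2.2.1) hc
    have h3 : 0 ≤ S.Θ (lam * (c N).1) x :=
      S.Θ_nonneg _ x (by nlinarith [(c N).2.1]) (hcore' N)
    have h4 : Λ < (N : ℝ) * eta := by
      rw [div_lt_iff₀ heta0] at hN
      linarith
    nlinarith
  -- the decomposition
  set A : ℕ → Set (EuclideanSpace ℝ (Fin n)) := fun i =>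
    {x ∈ T | ∀ σ, 0 < σ → σ < 1/(i+1 : ℝ) → good x σ} with hA
  refine ⟨A, fun i => fun x hx => hx.1, ?_, ?_⟩
  · intro x hx
    obtain ⟨i, hi⟩ := hrho x hx
    exact mem_iUnion.2 ⟨i, hx, hi⟩
  · intro i
    refine ⟨min (1/(8*(i+1 : ℝ))) (r₀/6), lt_min (by positivity) (by positivity), ?_⟩
    intro x hxA s hs0 hsρ
    have hs8 : s ≤ 1/(8*(i+1:ℝ)) := le_trans hsρ (min_le_left _ _)
    have hs6 : s ≤ r₀/6 := le_trans hsρ (min_le_right _ _)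
    have hxT : x ∈ T := hxA.1
    obtain ⟨hc, hΘx, hdk⟩ := hTfacts x hxT
    have h4s0 : 0 < 4*s := by linarith
    have h4si : 4*s < 1/(i+1:ℝ) := by
      have h0 : (0:ℝ) < (i+1:ℝ) := by positivity
      rw [lt_div_iff₀ h0]
      rw [le_div_iff₀ (by positivity : (0:ℝ) < 8*(i+1:ℝ))] at hs8
      nlinarith
    have h5s : 5*s < r₀ := by linarith
    have h4sr : 4*s ≤ r₀ := by linarith
    have hgx : good x (4*s) := hxA.2 _ h4s0 h4si
    -- the largest index with small control function
    let Pd : ℕ → Prop := fun j => S.d j x (4*s) ≤ g (k+1-j)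
    have hPd0 : Pd 0 := by
      show S.d 0 x (4*s) ≤ g (k+1-0)
      simpa using hgoodd x hxT (4*s) h4s0 (by linarith) hgx
    let j' : ℕ := Nat.findGreatest Pd k
    have hj'k : j' ≤ k := Nat.findGreatest_le k
    have hPj' : Pd j' := Nat.findGreatest_spec (Nat.zero_le k) hPd0
    have hlow : g (k - j') ≤ S.d (j'+1) x (4*s) := by
      rcases Nat.lt_or_ge j' k with hlt | hge
      · have hnot : ¬ Pd (j'+1) :=
          Nat.findGreatest_is_greatest (Nat.lt_succ_self _) (by omega)
        have : g (k+1-(j'+1)) < S.d (j'+1) x (4*s) := by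
          simpa [Pd, not_le] using hnot
        have heq : k+1-(j'+1) = k - j' := by omega
        rw [heq] at this
        exact le_of_lt this
      · have hj'eq : j' = k := le_antisymm hj'k hge
        have : δ ≤ S.d (k+1) x (4*s) := hdk _ h4s0 h4sr
        rw [hj'eq]
        simpa [hgδ] using this
    have hhigh : S.d j' x (4*s) ≤ g ((k - j') + 1) := by
      have heq : (k - j') + 1 = k + 1 - j' := by omega
      rw [heq]
      exact hPj'
    obtain ⟨V, hVrank, hVy⟩ := hchain (k - j') x s j'
      ⟨S.core_mono (show 5*s ≤ r₀ by linarith) hc, hΘx⟩ hc h5s (by omega) hhigh hlow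
    refine ⟨V, by omega, ?_⟩
    rintro y ⟨hyA, hyb⟩
    refine ⟨hyb, ?_⟩
    by_contra hnt
    have hyd := hVy y ⟨hyb, hnt⟩
    have hyT : y ∈ T := hyA.1
    have hgy : good y (4*s) := hyA.2 _ h4s0 h4si
    have hyd0 : S.d 0 y (4*s) ≤ g (k+1) := hgoodd y hyT (4*s) h4s0 (by linarith) hgy
    have hmono : g (k+1) ≤ g ((k - j') + 1) := hganti _ _ (by omega)
    linarith

end StratSetting


theorem abstract_stratification {n : ℕ} (S : StratSetting n)
    (hI : S.HypI) (hII : S.HypII) (r₀ : ℝ) (hr₀ : 0 < r₀) :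
    (∀ k, 1 ≤ k → k ≤ S.m - 1 → dimH (S.stratFull k r₀) ≤ (k : ENNReal)) ∧
      (S.stratFull 0 r₀).Countable := by
  classical
  constructor
  · -- the dimension estimate
    intro k hk1 hkm
    have hmpos := S.mpos
    have hkmlt : k < S.m := by omega
    refine dimH_le fun d' hd' => ?_
    by_contra hcon
    set d : ℝ := (d' : ℝ) with hdd
    have hkd : (k : ℝ) < d := by
      have h1 : (k : ℝ≥0∞) < (d' : ℝ≥0∞) := not_le.1 hcon
      exact_mod_cast h1
    have hd0 : 0 ≤ d := d'.coe_nonneg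
    -- choose the parameter τ
    obtain ⟨τ, hτ0, hτ8, hτsmall⟩ :
        ∃ τ : ℝ, 0 < τ ∧ τ ≤ 1/8 ∧ (8/τ)^k * (4*τ)^d ≤ 1/2 := by
      set ε : ℝ := d - k with hε
      have hε0 : 0 < ε := by simp only [hε]; linarith
      set C : ℝ := (8:ℝ)^k * (4:ℝ)^d with hC
      have h4d : (0:ℝ) < (4:ℝ)^d := Real.rpow_pos_of_pos (by norm_num) d
      have hC0 : 0 < C := by positivity
      set b : ℝ := (1/2) / C with hb
      have hb0 : 0 < b := by positivity
      set τ : ℝ := min (1/8) (b ^ (1/ε)) with hτ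
      have hτ0 : 0 < τ := lt_min (by norm_num) (Real.rpow_pos_of_pos hb0 _)
      refine ⟨τ, hτ0, min_le_left _ _, ?_⟩
      have hτb : τ ≤ b ^ (1/ε) := min_le_right _ _
      have hτε : τ ^ ε ≤ b := by
        calc τ ^ ε ≤ (b ^ (1/ε)) ^ ε := Real.rpow_le_rpow hτ0.le hτb hε0.le
          _ = b := by
              rw [← Real.rpow_mul hb0.le, one_div, inv_mul_cancel₀ hε0.ne', Real.rpow_one]
      have hτk : (τ:ℝ)^k ≠ 0 := by positivity
      have hkey : (8/τ)^k * (4*τ)^d = C * τ ^ ε := by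
        rw [hC, hε]
        rw [div_pow, Real.mul_rpow (by norm_num) hτ0.le, Real.rpow_sub hτ0,
          Real.rpow_natCast]
        field_simp
      rw [hkey]
      calc C * τ ^ ε ≤ C * b := by
            exact mul_le_mul_of_nonneg_left hτε hC0.le
        _ = 1/2 := by rw [hb]; field_simp
    have hτ1 : τ < 1 := by linarith
    have h8τ : (1:ℝ) ≤ 8/τ := by
      rw [le_div_iff₀ hτ0]; linarith
    -- each stratum piece is null
    have hzero : ∀ δ ∈ Ioo (0:ℝ) 1, μH[d] (S.stratInt k r₀ δ) = 0 := by
      intro δ hδ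
      obtain ⟨A, hA1, hA2, hA3⟩ := S.key hI hII hr₀ hkmlt hδ hτ0 hτ1
      have hAzero : ∀ i, μH[d] (A i) = 0 := by
        intro i
        obtain ⟨ρ, hρ0, hρ⟩ := hA3 i
        refine hausdorff_zero_of_cover (A i) (M := (8/τ)^k) hρ0
          (by linarith : (0:ℝ) < 4*τ) (by linarith : 4*τ < 1)
          (one_le_pow₀ h8τ) ?_ hd0 ?_
        · intro x hx s hs0 hsρ
          obtain ⟨V, hVk, hVsub⟩ := hρ x hx s hs0 hsρ
          obtain ⟨F, hF1, hF2, hF3⟩ := tube_cover V x hs0 hτ0 hτ1.le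
            (A i ∩ ball x s) hVsub ⟨hx, mem_ball_self hs0⟩
          refine ⟨F, subset_trans hF1 inter_subset_left, ?_, ?_⟩
          · exact le_trans hF2 (pow_le_pow_right₀ h8τ hVk)
          · intro y hy
            have h := hF3 hy
            rw [show 4*(τ*s) = (4*τ)*s by ring] at h
            exact h
        · rw [← ENNReal.ofReal_mul (by positivity)]
          calc ENNReal.ofReal ((8/τ)^k * (4*τ)^d) ≤ ENNReal.ofReal (1/2) :=
                ENNReal.ofReal_le_ofReal hτsmall
            _ < 1 := by
                rw [show (1:ℝ≥0∞) = ENNReal.ofReal 1 by simp]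
                exact (ENNReal.ofReal_lt_ofReal_iff (by norm_num)).2 (by norm_num)
      refine le_antisymm ?_ zero_le
      calc μH[d] (S.stratInt k r₀ δ) ≤ μH[d] (⋃ i, A i) := measure_mono hA2
        _ = 0 := measure_iUnion_null hAzero
    -- hence the full stratum is null
    have hsubF : S.stratFull k r₀ ⊆ ⋃ j : ℕ, S.stratInt k r₀ (1/(j+2:ℝ)) := by
      intro x hx
      obtain ⟨δ, hδ, hxδ⟩ := mem_iUnion₂.1 hx
      obtain ⟨j, hj⟩ := exists_nat_one_div_lt hδ.1
      refine mem_iUnion.2 ⟨j, S.stratInt_mono ?_ hxδ⟩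
      have h1 : (1:ℝ)/(j+2) ≤ 1/(j+1) := by
        apply one_div_le_one_div_of_le (by positivity)
        push_cast; linarith
      push_cast at hj ⊢
      linarith
    have hzeroF : μH[d] (S.stratFull k r₀) = 0 := by
      refine le_antisymm ?_ zero_le
      calc μH[d] (S.stratFull k r₀) ≤ μH[d] (⋃ j : ℕ, S.stratInt k r₀ (1/(j+2:ℝ))) :=
            measure_mono hsubF
        _ = 0 := by
            refine measure_iUnion_null fun j => ?_
            refine hzero _ ⟨by positivity, ?_⟩
            rw [div_lt_one (by positivity)]
            push_cast; linarith
    rw [hdd] at hzeroF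
    rw [hzeroF] at hd'
    simp at hd'
  · -- countability of the zero-dimensional stratum
    have h0m : 0 < S.m := S.mpos
    have hcnt : ∀ δ ∈ Ioo (0:ℝ) 1, (S.stratInt 0 r₀ δ).Countable := by
      intro δ hδ
      obtain ⟨A, hA1, hA2, hA3⟩ := S.key hI hII hr₀ h0m hδ
        (by norm_num : (0:ℝ) < 1/2) (by norm_num : (1:ℝ)/2 < 1)
      have hAc : ∀ i, (A i).Countable := by
        intro i
        obtain ⟨ρ, hρ0, hρ⟩ := hA3 i
        have hsep : ∀ x ∈ A i, ∀ y ∈ A i, x ≠ y → ρ/2 < dist x y := by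
          intro x hx y hy hxy
          by_contra hle
          push_neg at hle
          have ht0 : 0 < dist x y := dist_pos.2 (fun h => hxy h)
          have hs0 : 0 < 2 * dist x y := by linarith
          have hsρ : 2 * dist x y ≤ ρ := by linarith
          obtain ⟨V, hV0, hVsub⟩ := hρ x hx _ hs0 hsρ
          have hVbot : V = ⊥ := Submodule.finrank_eq_zero.1 (Nat.le_zero.1 hV0)
          have hy2 : y ∈ ball x (2 * dist x y) := by
            rw [mem_ball, dist_comm]
            linarith
          have hmem := hVsub ⟨hy, hy2⟩
          rw [hVbot] at hmem
          have hthick : y ∈ thickening ((1/2) * (2 * dist x y))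
              ((x + ·) '' ((⊥ : Submodule ℝ (EuclideanSpace ℝ (Fin n))) :
                Set (EuclideanSpace ℝ (Fin n)))) := hmem.2
          rw [show ((⊥ : Submodule ℝ (EuclideanSpace ℝ (Fin n))) :
              Set (EuclideanSpace ℝ (Fin n))) = {0} from Submodule.bot_coe,
            Set.image_singleton, add_zero, thickening_singleton] at hthick
          rw [mem_ball, dist_comm] at hthick
          nlinarith
        have hdisj : (A i).PairwiseDisjoint (fun x => ball x (ρ/5)) := by
          intro x hx y hy hxy
          refine ball_disjoint_ball ?_
          have := hsep x hx y hy hxy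
          linarith
        exact hdisj.countable_of_isOpen (fun x _ => isOpen_ball)
          (fun x _ => ⟨x, mem_ball_self (by positivity)⟩)
      exact (Set.countable_iUnion hAc).mono hA2
    have hsubF : S.stratFull 0 r₀ ⊆ ⋃ j : ℕ, S.stratInt 0 r₀ (1/(j+2:ℝ)) := by
      intro x hx
      obtain ⟨δ, hδ, hxδ⟩ := mem_iUnion₂.1 hx
      obtain ⟨j, hj⟩ := exists_nat_one_div_lt hδ.1
      refine mem_iUnion.2 ⟨j, S.stratInt_mono ?_ hxδ⟩
      have h1 : (1:ℝ)/(j+2) ≤ 1/(j+1) := by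
        apply one_div_le_one_div_of_le (by positivity)
        push_cast; linarith
      push_cast at hj ⊢
      linarith
    refine Set.Countable.mono hsubF ?_
    refine Set.countable_iUnion fun j => ?_
    refine hcnt _ ⟨by positivity, ?_⟩
    rw [div_lt_one (by positivity)]
    push_cast; linarith
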